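/- Define b : ℕ → ℤ by b(0)=1, b(1)=-1, b(2)=A, and for n ≥ 3, b(n) = -(1/2)·∑_{k=0}^{n-1} b(k)·C(n+1,k+1). Then b(2k)=0 for all k ≥ 2. -/

import Mathlib

open Finset

private lemma orth (N j : ℕ) (hj : j ≤ N) :
    ∑ i ∈ range (N + 1), (-1 : ℤ) ^ i * (N.choose i) * (i.choose j) =
      (-1) ^ j * (if j = N then 1 else 0) := by
  rw [range_eq_Ico, ← Finset.sum_Ico_consecutive _ (Nat.zero_le j) (by omega : j ≤ N + 1)]
  have h1 : ∑ i ∈ Finset.Ico 0 j, (-1 : ℤ) ^ i * (N.choose i) * (i.choose j) = 0 := by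
    apply Finset.sum_eq_zero
    intro i hi
    simp only [Finset.mem_Ico] at hi
    rw [Nat.choose_eq_zero_of_lt hi.2]
    push_cast
    ring
  rw [h1, zero_add, Finset.sum_Ico_eq_sum_range]
  have h2 : ∀ t ∈ range (N + 1 - j), (-1 : ℤ) ^ (j + t) * (N.choose (j + t)) * ((j + t).choose j)
      = ((-1 : ℤ) ^ j * (N.choose j)) * ((-1) ^ t * ((N - j).choose t)) := by
    intro t ht
    simp only [mem_range] at ht
    have hc : N.choose (j + t) * (j + t).choose j = N.choose j * (N - j).choose t := by
      have := Nat.choose_mul (n := N) (k := j + t) (s := j) (by omega)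
      simpa using this
    have hc' : ((N.choose (j + t) : ℤ)) * ((j + t).choose j)
        = (N.choose j : ℤ) * ((N - j).choose t) := by exact_mod_cast congrArg (Nat.cast : ℕ → ℤ) hc
    calc (-1 : ℤ) ^ (j + t) * (N.choose (j + t)) * ((j + t).choose j)
        = (-1 : ℤ) ^ (j + t) * ((N.choose (j + t) : ℤ) * ((j + t).choose j)) := by ring
      _ = (-1 : ℤ) ^ (j + t) * ((N.choose j : ℤ) * ((N - j).choose t)) := by rw [hc']
      _ = ((-1 : ℤ) ^ j * (N.choose j)) * ((-1) ^ t * ((N - j).choose t)) := by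
          rw [pow_add]; ring
  rw [Finset.sum_congr rfl h2, ← Finset.mul_sum]
  have h3 : N + 1 - j = (N - j) + 1 := by omega
  rw [h3, Int.alternating_sum_range_choose]
  by_cases hjN : j = N
  · subst hjN
    simp
  · rw [if_neg (by omega), if_neg hjN]
    ring

theorem stmt_6 (A : ℤ) (b : ℕ → ℤ)
    (h0 : b 0 = 1) (h1 : b 1 = -1) (h2 : b 2 = A)
    (hrec : ∀ n, 3 ≤ n →
      2 * b n = -∑ k ∈ Finset.range n, b k * ((n + 1).choose (k + 1) : ℤ)) :
    ∀ k, 2 ≤ k → b (2 * k) = 0 := by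
  set c : ℕ → ℤ := fun j => if j = 0 then 0 else b (j - 1) with hc
  set d : ℕ → ℤ := fun N => if N = 1 then 2 else if N = 3 then 2 * A else 0 with hd
  -- basic relation
  have R : ∀ N, ∑ j ∈ range (N + 1), c j * (N.choose j) + c N = d N := by
    intro N
    rcases lt_or_ge N 4 with hN4 | hN4
    · interval_cases N
      · simp [hc, hd]
      · simp [hc, hd, Finset.sum_range_succ, h0]
      · simp [hc, hd, Finset.sum_range_succ, h0, h1]
      · simp [hc, hd, Finset.sum_range_succ, h0, h1, h2]
        ring
    · obtain ⟨n, rfl⟩ : ∃ n, N = n + 1 := ⟨N - 1, by omega⟩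
      have hn : 3 ≤ n := by omega
      have hr := hrec n hn
      have hsum : ∑ j ∈ range (n + 2), c j * ((n+1).choose j : ℤ)
          = ∑ k ∈ range (n + 1), b k * ((n + 1).choose (k + 1) : ℤ) := by
        rw [Finset.sum_range_succ' (fun j => c j * ((n+1).choose j : ℤ))]
        simp [hc]
      have hsplit : ∑ k ∈ range (n + 1), b k * ((n + 1).choose (k + 1) : ℤ)
          = ∑ k ∈ range n, b k * ((n + 1).choose (k + 1) : ℤ) + b n := by
        rw [Finset.sum_range_succ, Nat.choose_self]
        push_cast
        ring
      have hcn : c (n + 1) = b n := by simp [hc]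
      have hdn : d (n + 1) = 0 := by
        simp only [hd]
        rw [if_neg (by omega), if_neg (by omega)]
      rw [hsum, hsplit, hcn, hdn]
      linarith
  -- reflected relation
  set v : ℕ → ℤ := fun j => (-1) ^ j * c j with hv
  have R2 : ∀ N, ∑ j ∈ range (N + 1), v j * (N.choose j) + v N
      = ∑ i ∈ range (N + 1), (-1) ^ i * d i * (N.choose i) := by
    intro N
    have step1 : ∀ i ∈ range (N + 1), (-1 : ℤ) ^ i * d i * (N.choose i)
        = (∑ j ∈ range (N + 1), ((-1 : ℤ) ^ i * (N.choose i) * (i.choose j)) * c j)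
          + v i * (N.choose i) := by
      intro i hi
      simp only [mem_range] at hi
      have hdi := R i
      have htrunc : ∑ j ∈ range (N + 1), ((-1 : ℤ) ^ i * (N.choose i) * (i.choose j)) * c j
          = (-1 : ℤ) ^ i * (N.choose i) * ∑ j ∈ range (i + 1), c j * (i.choose j) := by
        rw [range_eq_Ico,
          ← Finset.sum_Ico_consecutive _ (Nat.zero_le (i+1)) (by omega : i + 1 ≤ N + 1)]
        have hz : ∑ j ∈ Finset.Ico (i+1) (N+1),
            ((-1 : ℤ) ^ i * (N.choose i) * (i.choose j)) * c j = 0 := by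
          apply Finset.sum_eq_zero
          intro j hj
          simp only [Finset.mem_Ico] at hj
          rw [Nat.choose_eq_zero_of_lt (show i < j by omega)]
          push_cast; ring
        rw [hz, add_zero, Finset.mul_sum]
        rw [← range_eq_Ico]
        apply Finset.sum_congr rfl
        intro j _
        ring
      rw [htrunc]
      have : ∑ j ∈ range (i + 1), c j * (i.choose j) = d i - c i := by linarith
      rw [this, hv]
      ring
    rw [Finset.sum_congr rfl step1, Finset.sum_add_distrib]
    have hswap : ∑ i ∈ range (N + 1), ∑ j ∈ range (N + 1),
        ((-1 : ℤ) ^ i * (N.choose i) * (i.choose j)) * c j = v N := by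
      rw [Finset.sum_comm]
      have step2 : ∀ j ∈ range (N + 1),
          ∑ i ∈ range (N + 1), ((-1 : ℤ) ^ i * (N.choose i) * (i.choose j)) * c j
          = if j = N then v N else 0 := by
        intro j hj
        simp only [mem_range] at hj
        rw [← Finset.sum_mul, orth N j (by omega)]
        by_cases hjN : j = N
        · rw [if_pos hjN, if_pos hjN, hjN, hv]
          ring
        · rw [if_neg hjN, if_neg hjN]
          ring
      rw [Finset.sum_congr rfl step2, Finset.sum_ite_eq' (range (N+1)) N (fun _ => v N)]
      rw [if_pos (by simp only [Finset.mem_range]; omega)]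
    rw [hswap]
    ring
  -- subtract: w relation
  set w : ℕ → ℤ := fun j => c j - v j with hw
  have WR : ∀ N, ∑ j ∈ range (N + 1), w j * (N.choose j) + w N
      = d N - ∑ i ∈ range (N + 1), (-1) ^ i * d i * (N.choose i) := by
    intro N
    have hR := R N
    have hR2 := R2 N
    have hsplit : ∑ j ∈ range (N + 1), w j * (N.choose j)
        = ∑ j ∈ range (N + 1), c j * (N.choose j) - ∑ j ∈ range (N + 1), v j * (N.choose j) := by
      rw [← Finset.sum_sub_distrib]
      apply Finset.sum_congr rfl
      intro j _
      rw [hw]; ring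
    rw [hsplit, hw]
    simp only
    linarith
  -- compute the d-sum for N ≥ 3
  have Dsum : ∀ N, 3 ≤ N → ∑ i ∈ range (N + 1), (-1 : ℤ) ^ i * d i * (N.choose i)
      = -2 * (N.choose 1) - 2 * A * (N.choose 3) := by
    intro N hN
    have hpt : ∀ i ∈ range (N + 1), (-1 : ℤ) ^ i * d i * (N.choose i)
        = (if i = 1 then (-2 : ℤ) * (N.choose 1) else 0)
          + (if i = 3 then (-2 : ℤ) * A * (N.choose 3) else 0) := by
      intro i _
      by_cases hi1 : i = 1
      · subst hi1
        simp [hd]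
      · by_cases hi3 : i = 3
        · subst hi3
          simp [hd]
        · rw [if_neg hi1, if_neg hi3]
          have : d i = 0 := by
            simp only [hd]
            rw [if_neg hi1, if_neg hi3]
          rw [this]
          ring
    rw [Finset.sum_congr rfl hpt, Finset.sum_add_distrib,
      Finset.sum_ite_eq' (range (N+1)) 1 (fun _ => (-2 : ℤ) * (N.choose 1)),
      Finset.sum_ite_eq' (range (N+1)) 3 (fun _ => (-2 : ℤ) * A * (N.choose 3)),
      if_pos (by simp only [Finset.mem_range]; omega), if_pos (by simp only [Finset.mem_range]; omega)]
    ring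
  -- facts about w
  have hw_even : ∀ j, Even j → w j = 0 := by
    intro j hj
    simp only [hw, hv, Even.neg_one_pow hj]
    ring
  have hw1 : w 1 = 2 := by simp [hw, hv, hc, h0]
  have hw3 : w 3 = 2 * A := by simp [hw, hv, hc, h2]; ring
  have hw_odd : ∀ j, Odd j → w j = 2 * c j := by
    intro j hj
    simp only [hw, hv, Odd.neg_one_pow hj]
    ring
  -- main induction
  intro k
  induction k using Nat.strong_induction_on with
  | _ k IH =>
    intro hk
    set N := 2 * k + 1 with hN
    have hN5 : 5 ≤ N := by omega
    have hNodd : Odd N := ⟨k, by omega⟩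
    have hpt : ∀ j ∈ range (N + 1), w j * (N.choose j)
        = (if j = 1 then (2 : ℤ) * (N.choose 1) else 0)
          + (if j = 3 then (2 : ℤ) * A * (N.choose 3) else 0)
          + (if j = N then w N else 0) := by
      intro j hj
      simp only [mem_range] at hj
      by_cases hj1 : j = 1
      · subst hj1
        rw [hw1, if_pos rfl, if_neg (by omega), if_neg (by omega)]
        ring
      · by_cases hj3 : j = 3
        · subst hj3
          rw [hw3, if_pos rfl, if_neg hj1, if_neg (by omega)]
          ring
        · by_cases hjN : j = N
          · subst hjN
            rw [if_pos rfl, if_neg hj1, if_neg hj3, Nat.choose_self]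
            push_cast; ring
          · rw [if_neg hj1, if_neg hj3, if_neg hjN]
            rcases Nat.even_or_odd j with hje | hjo
            · rw [hw_even j hje]; ring
            · -- odd j, j ≠ 1, 3, N, j < N+1
              obtain ⟨m, hm⟩ := hjo
              have hj0 : w j = 2 * c j := hw_odd j ⟨m, hm⟩
              have hcj : c j = b (2 * m) := by
                simp only [hc]
                rw [if_neg (by omega)]
                congr 1
                omega
              have hbm : b (2 * m) = 0 := by
                apply IH m (by omega) (by omega)
              rw [hj0, hcj, hbm]
              ring
    have hWR := WR N
    rw [Finset.sum_congr rfl hpt] at hWR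
    rw [Finset.sum_add_distrib, Finset.sum_add_distrib,
      Finset.sum_ite_eq' (range (N+1)) 1 (fun _ => (2 : ℤ) * (N.choose 1)),
      Finset.sum_ite_eq' (range (N+1)) 3 (fun _ => (2 : ℤ) * A * (N.choose 3)),
      Finset.sum_ite_eq' (range (N+1)) N (fun _ => w N),
      if_pos (by simp only [Finset.mem_range]; omega), if_pos (by simp only [Finset.mem_range]; omega), if_pos (by simp only [Finset.mem_range]; omega)] at hWR
    rw [Dsum N (by omega)] at hWR
    have hdN : d N = 0 := by
      simp only [hd]
      rw [if_neg (by omega), if_neg (by omega)]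
    rw [hdN] at hWR
    have hwN : w N = 0 := by linarith
    have hcN : c N = b (2 * k) := by
      simp only [hc]
      rw [if_neg (by omega)]
      congr 1
    have := hw_odd N hNodd
    rw [hwN, hcN] at this
    linarith
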